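/- Let n ≥ 3 and let S be a 4-cap-free, n-cup-free configuration of size at least C(n-1,2)+1. Let p_S be the rightmost vertex that is the left endpoint of some (n-1)-cup, and q_S the leftmost vertex that is the right endpoint of some (n-1)-cup. Then p_S ≤ q_S. -/

import Mathlib

variable {α : Type*} [LinearOrder α]

/-- Every consecutive triple of the list satisfies `f`. -/
def Triples (f : α → α → α → Prop) : List α → Prop
  | x :: y :: z :: l => f x y z ∧ Triples f (y :: z :: l)
  | _ => True

/-- `l` is a cup in the configuration `(S, cup)`: a nonempty increasing list of
vertices of `S` all of whose consecutive triples are colored cup. -/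
def IsCupIn (S : Finset α) (cup : α → α → α → Prop) (l : List α) : Prop :=
  l ≠ [] ∧ l.Chain' (· < ·) ∧ (∀ x ∈ l, x ∈ S) ∧ Triples cup l

/-- `l` is a cap in the configuration `(S, cup)`. -/
def IsCapIn (S : Finset α) (cup : α → α → α → Prop) (l : List α) : Prop :=
  l ≠ [] ∧ l.Chain' (· < ·) ∧ (∀ x ∈ l, x ∈ S) ∧ Triples (fun x y z => ¬ cup x y z) l

/-- The configuration has no cap with `a` (or more) vertices. -/
def CapFree (S : Finset α) (cup : α → α → α → Prop) (a : ℕ) : Prop :=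
  ∀ l : List α, IsCapIn S cup l → l.length < a

/-- The configuration has no cup with `b` (or more) vertices. -/
def CupFree (S : Finset α) (cup : α → α → α → Prop) (b : ℕ) : Prop :=
  ∀ l : List α, IsCupIn S cup l → l.length < b

def StartsAt (l : List α) (p : α) : Prop := l.head? = some p

def EndsAt (l : List α) (p : α) : Prop := l.getLast? = some p

/-- A weak `(a, b)`-gon: an `a`-cap and a `b`-cup sharing both endpoints. -/
def HasWeakGon (S : Finset α) (cup : α → α → α → Prop) (a b : ℕ) : Prop :=
  ∃ (A U : List α) (x y : α), IsCapIn S cup A ∧ A.length = a ∧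
    IsCupIn S cup U ∧ U.length = b ∧
    StartsAt A x ∧ StartsAt U x ∧ EndsAt A y ∧ EndsAt U y

/-- Two cups from `p` to `r` and from `q` to `s` are interweaved if `p < q ≤ r < s`. -/
def Interweaved (C₁ C₂ : List α) : Prop :=
  ∃ p r q s, StartsAt C₁ p ∧ EndsAt C₁ r ∧ StartsAt C₂ q ∧ EndsAt C₂ s ∧
    p < q ∧ q ≤ r ∧ r < s

/-- A laced `(n-1)`-cup: an `(n-1)`-cup from `p` to `q` together with a cup ending
at `p` and a cup starting at `q` whose sizes sum to `n - 1`. -/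
def IsLacedCup (S : Finset α) (cup : α → α → α → Prop) (n : ℕ) (C : List α) : Prop :=
  IsCupIn S cup C ∧ C.length = n - 1 ∧
  ∃ p q Cp Cq, StartsAt C p ∧ EndsAt C q ∧ IsCupIn S cup Cp ∧ IsCupIn S cup Cq ∧
    EndsAt Cp p ∧ StartsAt Cq q ∧ Cp.length + Cq.length = n - 1

/-- A slope labeling of an `a`-cap-free configuration: labels in `{1, …, a-2}`
such that `s x y ≤ s y z` forces `x y z` to be a cup. -/
def IsSlopeLabeling (S : Finset α) (cup : α → α → α → Prop) (a : ℕ) (s : α → α → ℕ) : Prop :=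
  (∀ x ∈ S, ∀ y ∈ S, x < y → 1 ≤ s x y ∧ s x y ≤ a - 2) ∧
  (∀ x ∈ S, ∀ y ∈ S, ∀ z ∈ S, x < y → y < z → s x y ≤ s y z → cup x y z)

/-- `α_i(p)`: maximum length of a cup ending at `p` with last edge of label `≤ i`
(`1` if there is no such cup). -/
noncomputable def alphaStat (S : Finset α) (cup : α → α → α → Prop) (s : α → α → ℕ)
    (i : ℕ) (p : α) : ℕ :=
  max 1 (sSup {k | ∃ (l : List α) (x : α), IsCupIn S cup l ∧ EndsAt l p ∧
    l.length = k ∧ l.dropLast.getLast? = some x ∧ s x p ≤ i})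

/-- `β(p)`: maximum length of a cup ending at `p` (`1` if there is none). -/
noncomputable def betaStat (S : Finset α) (cup : α → α → α → Prop) (p : α) : ℕ :=
  max 1 (sSup {k | ∃ l : List α, IsCupIn S cup l ∧ EndsAt l p ∧ l.length = k})

/-- The cup coloring of the mirror reflection. -/
def opCup (cup : α → α → α → Prop) : αᵒᵈ → αᵒᵈ → αᵒᵈ → Prop :=
  fun x y z => cup (OrderDual.ofDual z) (OrderDual.ofDual y) (OrderDual.ofDual x)

/-- The vertex set of the mirror reflection. -/
def opSet (S : Finset α) : Finset αᵒᵈ := S.map OrderDual.toDual.toEmbedding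

/-- The mirror reflection of a cap/cup. -/
def opList (l : List α) : List αᵒᵈ := (l.map OrderDual.toDual).reverse

theorem mem_of_getLast?' {l : List α} {x : α} (h : l.getLast? = some x) : x ∈ l := by
  obtain ⟨hne, rfl⟩ := List.mem_getLast?_eq_getLast (Option.mem_def.mpr h)
  exact List.getLast_mem hne

theorem triples_concat (f : α → α → α → Prop) (z : α) :
    ∀ (l : List α), Triples f l →
    (∀ a q, l.dropLast.getLast? = some a → l.getLast? = some q → f a q z) →
    Triples f (l ++ [z])
  | [], _, _ => trivial
  | [_], _, _ => trivial
  | [x, y], _, h => ⟨h x y rfl rfl, trivial⟩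
  | x :: y :: w :: l, ht, h => by
      refine ⟨ht.1, triples_concat f z (y :: w :: l) ht.2 ?_⟩
      intro a q ha hq
      apply h a q
      · simpa using ha
      · simpa using hq

theorem stmt12 (n : ℕ) (hn : 3 ≤ n) (S : Finset α) (cup : α → α → α → Prop)
    (h4 : CapFree S cup 4) (hncf : CupFree S cup n)
    (hcard : Nat.choose (n - 1) 2 + 1 ≤ S.card)
    (pS qS : α)
    (hpL : ∃ C : List α, IsCupIn S cup C ∧ C.length = n - 1 ∧ StartsAt C pS)
    (hpMax : ∀ x : α, (∃ C : List α, IsCupIn S cup C ∧ C.length = n - 1 ∧ StartsAt C x) → x ≤ pS)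
    (hqR : ∃ C : List α, IsCupIn S cup C ∧ C.length = n - 1 ∧ EndsAt C qS)
    (hqMin : ∀ x : α, (∃ C : List α, IsCupIn S cup C ∧ C.length = n - 1 ∧ EndsAt C x) → qS ≤ x) :
    pS ≤ qS := by
  by_contra hlt
  push_neg at hlt
  obtain ⟨B, hB, hBlen, hBst⟩ := hpL
  obtain ⟨A, hA, hAlen, hAed⟩ := hqR
  obtain ⟨hAne, hAch, hAmem, hAtr⟩ := hA
  obtain ⟨hBne, hBch, hBmem, hBtr⟩ := hB
  have hn2 : 2 ≤ n - 1 := by omega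
  -- A has length ≥ 2, ends at qS, get penultimate a
  have hAlast : A.getLast hAne = qS := by
    have := List.getLast?_eq_getLast hAne
    rw [hAed] at this; exact (Option.some_injective _ this.symm)
  have hAsplit : A.dropLast ++ [qS] = A := by
    rw [← hAlast]; exact List.dropLast_append_getLast hAne
  have hAdne : A.dropLast ≠ [] := by
    intro h
    have := congrArg List.length hAsplit
    simp [h, hAlen] at this
    omega
  obtain ⟨a, ha⟩ : ∃ a, A.dropLast.getLast? = some a :=
    ⟨A.dropLast.getLast hAdne, List.getLast?_eq_getLast hAdne⟩
  have haS : a ∈ S := hAmem a (List.dropLast_subset A (mem_of_getLast?' ha))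
  have haq : a < qS := by
    rw [← hAsplit, List.Chain', List.isChain_append] at hAch
    exact hAch.2.2 a ha qS rfl
  -- B starts at pS, get second element b
  obtain ⟨B', hB'⟩ : ∃ B', B = pS :: B' := by
    cases B with
    | nil => exact absurd rfl hBne
    | cons x t =>
      simp [StartsAt] at hBst
      exact ⟨t, by rw [hBst]⟩
  obtain ⟨b, B'', hB''⟩ : ∃ b B'', B' = b :: B'' := by
    cases B' with
    | nil =>
      exfalso; rw [hB'] at hBlen; simp at hBlen; omega
    | cons b t => exact ⟨b, t, rfl⟩
  subst hB' hB''
  have hbS : b ∈ S := hBmem b (by simp)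
  have hpb : pS < b := (List.isChain_cons_cons.mp hBch).1
  have hpS : pS ∈ S := hBmem pS (by simp)
  have hqS : qS ∈ S := hAmem qS (mem_of_getLast?' hAed)
  -- claim 1 : ¬ cup a qS pS
  have hc1 : ¬ cup a qS pS := by
    intro hc
    have hcup : IsCupIn S cup (A ++ [pS]) := by
      refine ⟨by simp, ?_, ?_, ?_⟩
      · rw [List.Chain', List.isChain_append]
        refine ⟨hAch, List.isChain_singleton _, ?_⟩
        intro x hx y hy
        rw [hAed] at hx; simp at hx hy; subst hx; subst hy; exact hlt
      · intro x hx
        rcases List.mem_append.mp hx with h | h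
        · exact hAmem x h
        · simp at h; subst h; exact hpS
      · refine triples_concat cup pS A hAtr ?_
        intro a' q' ha' hq'
        rw [ha] at ha'; rw [hAed] at hq'
        cases ha'; cases hq'; exact hc
    have := hncf _ hcup
    simp [hAlen] at this
    omega
  -- claim 2 : ¬ cup qS pS b
  have hc2 : ¬ cup qS pS b := by
    intro hc
    have hcup : IsCupIn S cup (qS :: pS :: b :: B'') := by
      refine ⟨by simp, ?_, ?_, ?_⟩
      · exact List.isChain_cons_cons.mpr ⟨hlt, hBch⟩
      · intro x hx
        rcases List.mem_cons.mp hx with h | h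
        · subst h; exact hqS
        · exact hBmem x h
      · exact ⟨hc, hBtr⟩
    have := hncf _ hcup
    have hl : (pS :: b :: B'').length = n - 1 := hBlen
    simp at this hl
    omega
  -- the 4-cap
  have hcap : IsCapIn S cup [a, qS, pS, b] := by
    refine ⟨by simp, ?_, ?_, ?_⟩
    · simp [List.Chain', List.isChain_cons_cons]
      exact ⟨haq, hlt, hpb⟩
    · intro x hx
      simp at hx
      rcases hx with h | h | h | h <;> subst h <;> assumption
    · exact ⟨hc1, hc2, trivial⟩
  have := h4 _ hcap
  simp at this
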